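/- For C¹ functions F₀,...,F₃ : ℝ⁴ → ℝ, if the six exactness conditions hold on all of ℝ⁴ and additionally F₃ is nowhere zero, then any three-times-differentiable solution y of F₃y''' + F₂y'' + F₁y' + F₀ = 0 on an interval I satisfies a second-order implicit equation Ψ(t, y, y', y'') = c, where Ψ(t,y,p,q) = ∫_{0}^{t} F₀(ξ,y,p,q)dξ + ∫_{0}^{y} F₁(0,ξ,p,q)dξ + ∫_{0}^{p} F₂(0,0,ξ,q)dξ + ∫_{0}^{q} F₃(0,0,0,ξ)dξ and c is constant. -/

import Mathlib

/-- Partial derivative in the first coordinate `t`. -/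
noncomputable def pdT (F : ℝ → ℝ → ℝ → ℝ → ℝ) (t y p q : ℝ) : ℝ := deriv (fun s => F s y p q) t
/-- Partial derivative in the second coordinate `y`. -/
noncomputable def pdY (F : ℝ → ℝ → ℝ → ℝ → ℝ) (t y p q : ℝ) : ℝ := deriv (fun s => F t s p q) y
/-- Partial derivative in the third coordinate `p`. -/
noncomputable def pdP (F : ℝ → ℝ → ℝ → ℝ → ℝ) (t y p q : ℝ) : ℝ := deriv (fun s => F t y s q) p
/-- Partial derivative in the fourth coordinate `q`. -/
noncomputable def pdQ (F : ℝ → ℝ → ℝ → ℝ → ℝ) (t y p q : ℝ) : ℝ := deriv (fun s => F t y p s) q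

/-- View a curried function of four real variables as a function on `ℝ⁴`. -/
def uncurry4 (F : ℝ → ℝ → ℝ → ℝ → ℝ) : ℝ × ℝ × ℝ × ℝ → ℝ := fun v => F v.1 v.2.1 v.2.2.1 v.2.2.2

namespace Stmt17Aux

open ContinuousLinearMap MeasureTheory intervalIntegral Metric

abbrev E3 : Type := ℝ × ℝ × ℝ

section Helpers
variable {F : ℝ → ℝ → ℝ → ℝ → ℝ}

lemma sliceT (hF : ContDiff ℝ 1 (uncurry4 F)) (t y p q : ℝ) :
    HasDerivAt (fun s => F s y p q) (fderiv ℝ (uncurry4 F) (t, y, p, q) (1, 0, 0, 0)) t := by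
  have hγ : HasDerivAt (fun s : ℝ => ((s, y, p, q) : ℝ × ℝ × ℝ × ℝ)) (1, 0, 0, 0) t :=
    (hasDerivAt_id t).prodMk ((hasDerivAt_const t y).prodMk
      ((hasDerivAt_const t p).prodMk (hasDerivAt_const t q)))
  exact ((hF.differentiable one_ne_zero (t, y, p, q)).hasFDerivAt).comp_hasDerivAt t hγ

lemma sliceY (hF : ContDiff ℝ 1 (uncurry4 F)) (t y p q : ℝ) :
    HasDerivAt (fun s => F t s p q) (fderiv ℝ (uncurry4 F) (t, y, p, q) (0, 1, 0, 0)) y := by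
  have hγ : HasDerivAt (fun s : ℝ => ((t, s, p, q) : ℝ × ℝ × ℝ × ℝ)) (0, 1, 0, 0) y :=
    (hasDerivAt_const y t).prodMk ((hasDerivAt_id y).prodMk
      ((hasDerivAt_const y p).prodMk (hasDerivAt_const y q)))
  exact ((hF.differentiable one_ne_zero (t, y, p, q)).hasFDerivAt).comp_hasDerivAt y hγ

lemma sliceP (hF : ContDiff ℝ 1 (uncurry4 F)) (t y p q : ℝ) :
    HasDerivAt (fun s => F t y s q) (fderiv ℝ (uncurry4 F) (t, y, p, q) (0, 0, 1, 0)) p := by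
  have hγ : HasDerivAt (fun s : ℝ => ((t, y, s, q) : ℝ × ℝ × ℝ × ℝ)) (0, 0, 1, 0) p :=
    (hasDerivAt_const p t).prodMk ((hasDerivAt_const p y).prodMk
      ((hasDerivAt_id p).prodMk (hasDerivAt_const p q)))
  exact ((hF.differentiable one_ne_zero (t, y, p, q)).hasFDerivAt).comp_hasDerivAt p hγ

lemma sliceQ (hF : ContDiff ℝ 1 (uncurry4 F)) (t y p q : ℝ) :
    HasDerivAt (fun s => F t y p s) (fderiv ℝ (uncurry4 F) (t, y, p, q) (0, 0, 0, 1)) q := by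
  have hγ : HasDerivAt (fun s : ℝ => ((t, y, p, s) : ℝ × ℝ × ℝ × ℝ)) (0, 0, 0, 1) q :=
    (hasDerivAt_const q t).prodMk ((hasDerivAt_const q y).prodMk
      ((hasDerivAt_const q p).prodMk (hasDerivAt_id q)))
  exact ((hF.differentiable one_ne_zero (t, y, p, q)).hasFDerivAt).comp_hasDerivAt q hγ

lemma pdT_eq (hF : ContDiff ℝ 1 (uncurry4 F)) (t y p q : ℝ) :
    pdT F t y p q = fderiv ℝ (uncurry4 F) (t, y, p, q) (1, 0, 0, 0) := (sliceT hF t y p q).deriv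
lemma pdY_eq (hF : ContDiff ℝ 1 (uncurry4 F)) (t y p q : ℝ) :
    pdY F t y p q = fderiv ℝ (uncurry4 F) (t, y, p, q) (0, 1, 0, 0) := (sliceY hF t y p q).deriv
lemma pdP_eq (hF : ContDiff ℝ 1 (uncurry4 F)) (t y p q : ℝ) :
    pdP F t y p q = fderiv ℝ (uncurry4 F) (t, y, p, q) (0, 0, 1, 0) := (sliceP hF t y p q).deriv
lemma pdQ_eq (hF : ContDiff ℝ 1 (uncurry4 F)) (t y p q : ℝ) :
    pdQ F t y p q = fderiv ℝ (uncurry4 F) (t, y, p, q) (0, 0, 0, 1) := (sliceQ hF t y p q).deriv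

lemma fderiv_apply4 (hF : ContDiff ℝ 1 (uncurry4 F)) (t y p q dt dy dp dq : ℝ) :
    fderiv ℝ (uncurry4 F) (t, y, p, q) (dt, dy, dp, dq)
      = dt * pdT F t y p q + dy * pdY F t y p q + dp * pdP F t y p q + dq * pdQ F t y p q := by
  rw [pdT_eq hF, pdY_eq hF, pdP_eq hF, pdQ_eq hF]
  have hv : ((dt, dy, dp, dq) : ℝ × ℝ × ℝ × ℝ)
      = dt • ((1:ℝ), (0:ℝ), (0:ℝ), (0:ℝ)) + dy • (0, 1, 0, 0) + dp • (0, 0, 1, 0)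
        + dq • (0, 0, 0, 1) := by
    simp [Prod.ext_iff]
  rw [hv, map_add, map_add, map_add, _root_.map_smul, _root_.map_smul, _root_.map_smul, _root_.map_smul]
  simp [smul_eq_mul]

lemma contDfApply (hF : ContDiff ℝ 1 (uncurry4 F)) {X : Type*} [TopologicalSpace X]
    {γ : X → ℝ × ℝ × ℝ × ℝ} (hγ : Continuous γ) (w : ℝ × ℝ × ℝ × ℝ) :
    Continuous fun x => fderiv ℝ (uncurry4 F) (γ x) w :=
  ((hF.continuous_fderiv one_ne_zero).comp hγ).clm_apply continuous_const

lemma contPdT (hF : ContDiff ℝ 1 (uncurry4 F)) (y p q : ℝ) :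
    Continuous fun ξ => pdT F ξ y p q := by
  have : (fun ξ => pdT F ξ y p q)
      = fun ξ => fderiv ℝ (uncurry4 F) (ξ, y, p, q) (1, 0, 0, 0) :=
    funext fun ξ => pdT_eq hF ξ y p q
  rw [this]; exact contDfApply hF (by fun_prop) _

lemma contPdY (hF : ContDiff ℝ 1 (uncurry4 F)) (t p q : ℝ) :
    Continuous fun ξ => pdY F t ξ p q := by
  have : (fun ξ => pdY F t ξ p q)
      = fun ξ => fderiv ℝ (uncurry4 F) (t, ξ, p, q) (0, 1, 0, 0) :=
    funext fun ξ => pdY_eq hF t ξ p q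
  rw [this]; exact contDfApply hF (by fun_prop) _

lemma contPdP (hF : ContDiff ℝ 1 (uncurry4 F)) (t y q : ℝ) :
    Continuous fun ξ => pdP F t y ξ q := by
  have : (fun ξ => pdP F t y ξ q)
      = fun ξ => fderiv ℝ (uncurry4 F) (t, y, ξ, q) (0, 0, 1, 0) :=
    funext fun ξ => pdP_eq hF t y ξ q
  rw [this]; exact contDfApply hF (by fun_prop) _

lemma ftcT (hF : ContDiff ℝ 1 (uncurry4 F)) (y p q t : ℝ) :
    ∫ ξ in (0:ℝ)..t, pdT F ξ y p q = F t y p q - F 0 y p q := by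
  apply intervalIntegral.integral_eq_sub_of_hasDerivAt
  · intro ξ _
    rw [pdT_eq hF]; exact sliceT hF ξ y p q
  · exact (contPdT hF y p q).intervalIntegrable 0 t

lemma ftcY (hF : ContDiff ℝ 1 (uncurry4 F)) (t p q y : ℝ) :
    ∫ ξ in (0:ℝ)..y, pdY F t ξ p q = F t y p q - F t 0 p q := by
  apply intervalIntegral.integral_eq_sub_of_hasDerivAt
  · intro ξ _
    rw [pdY_eq hF]; exact sliceY hF t ξ p q
  · exact (contPdY hF t p q).intervalIntegrable 0 y

lemma ftcP (hF : ContDiff ℝ 1 (uncurry4 F)) (t y q p : ℝ) :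
    ∫ ξ in (0:ℝ)..p, pdP F t y ξ q = F t y p q - F t y 0 q := by
  apply intervalIntegral.integral_eq_sub_of_hasDerivAt
  · intro ξ _
    rw [pdP_eq hF]; exact sliceP hF t y ξ q
  · exact (contPdP hF t y q).intervalIntegrable 0 p

lemma fderiv_inner2 (hF : ContDiff ℝ 1 (uncurry4 F)) (ξ p q z dξ dp dq dz : ℝ) :
    fderiv ℝ (fun v : ℝ × ℝ × ℝ × ℝ => uncurry4 F (0, v.1, v.2.1, v.2.2.1)) (ξ, p, q, z)
        (dξ, dp, dq, dz)
      = fderiv ℝ (uncurry4 F) (0, ξ, p, q) (0, dξ, dp, dq) := by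
  set M : (ℝ × ℝ × ℝ × ℝ) →L[ℝ] (ℝ × ℝ × ℝ × ℝ) :=
    (0 : (ℝ × ℝ × ℝ × ℝ) →L[ℝ] ℝ).prod ((fst ℝ ℝ (ℝ × ℝ × ℝ)).prod
      (((fst ℝ ℝ (ℝ × ℝ)).comp (snd ℝ ℝ (ℝ × ℝ × ℝ))).prod
        ((fst ℝ ℝ ℝ).comp ((snd ℝ ℝ (ℝ × ℝ)).comp (snd ℝ ℝ (ℝ × ℝ × ℝ)))))) with hM
  have h1 : HasFDerivAt (fun v : ℝ × ℝ × ℝ × ℝ => uncurry4 F (M v))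
      ((fderiv ℝ (uncurry4 F) (M (ξ, p, q, z))).comp M) (ξ, p, q, z) :=
    ((hF.differentiable one_ne_zero) _).hasFDerivAt.comp _ M.hasFDerivAt
  have h2 : (fun v : ℝ × ℝ × ℝ × ℝ => uncurry4 F (0, v.1, v.2.1, v.2.2.1))
      = fun v => uncurry4 F (M v) := rfl
  rw [h2, h1.fderiv]
  rfl

lemma fderiv_inner3 (hF : ContDiff ℝ 1 (uncurry4 F)) (ξ q z w dξ dq dz dw : ℝ) :
    fderiv ℝ (fun v : ℝ × ℝ × ℝ × ℝ => uncurry4 F (0, 0, v.1, v.2.1)) (ξ, q, z, w)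
        (dξ, dq, dz, dw)
      = fderiv ℝ (uncurry4 F) (0, 0, ξ, q) (0, 0, dξ, dq) := by
  set M : (ℝ × ℝ × ℝ × ℝ) →L[ℝ] (ℝ × ℝ × ℝ × ℝ) :=
    (0 : (ℝ × ℝ × ℝ × ℝ) →L[ℝ] ℝ).prod ((0 : (ℝ × ℝ × ℝ × ℝ) →L[ℝ] ℝ).prod
      ((fst ℝ ℝ (ℝ × ℝ × ℝ)).prod
        ((fst ℝ ℝ (ℝ × ℝ)).comp (snd ℝ ℝ (ℝ × ℝ × ℝ))))) with hM
  have h1 : HasFDerivAt (fun v : ℝ × ℝ × ℝ × ℝ => uncurry4 F (M v))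
      ((fderiv ℝ (uncurry4 F) (M (ξ, q, z, w))).comp M) (ξ, q, z, w) :=
    ((hF.differentiable one_ne_zero) _).hasFDerivAt.comp _ M.hasFDerivAt
  have h2 : (fun v : ℝ × ℝ × ℝ × ℝ => uncurry4 F (0, 0, v.1, v.2.1))
      = fun v => uncurry4 F (M v) := rfl
  rw [h2, h1.fderiv]
  rfl

lemma fderiv_inner4 (hF : ContDiff ℝ 1 (uncurry4 F)) (ξ z w r dξ dz dw dr : ℝ) :
    fderiv ℝ (fun v : ℝ × ℝ × ℝ × ℝ => uncurry4 F (0, 0, 0, v.1)) (ξ, z, w, r)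
        (dξ, dz, dw, dr)
      = fderiv ℝ (uncurry4 F) (0, 0, 0, ξ) (0, 0, 0, dξ) := by
  set M : (ℝ × ℝ × ℝ × ℝ) →L[ℝ] (ℝ × ℝ × ℝ × ℝ) :=
    (0 : (ℝ × ℝ × ℝ × ℝ) →L[ℝ] ℝ).prod ((0 : (ℝ × ℝ × ℝ × ℝ) →L[ℝ] ℝ).prod
      ((0 : (ℝ × ℝ × ℝ × ℝ) →L[ℝ] ℝ).prod (fst ℝ ℝ (ℝ × ℝ × ℝ)))) with hM
  have h1 : HasFDerivAt (fun v : ℝ × ℝ × ℝ × ℝ => uncurry4 F (M v))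
      ((fderiv ℝ (uncurry4 F) (M (ξ, z, w, r))).comp M) (ξ, z, w, r) :=
    ((hF.differentiable one_ne_zero) _).hasFDerivAt.comp _ M.hasFDerivAt
  have h2 : (fun v : ℝ × ℝ × ℝ × ℝ => uncurry4 F (0, 0, 0, v.1))
      = fun v => uncurry4 F (M v) := rfl
  rw [h2, h1.fderiv]
  rfl

end Helpers

lemma clm_split (L : (ℝ × E3) →L[ℝ] ℝ) (p : ℝ) (e : E3) :
    L (p, e) = p * L (1, 0) + L (0, e) := by
  have h : ((p, e) : ℝ × E3) = p • ((1:ℝ), (0:E3)) + ((0:ℝ), e) := by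
    simp [Prod.ext_iff]
  rw [h, map_add, L.map_smul, smul_eq_mul]

lemma key (h : ℝ × E3 → ℝ) (hh : ContDiff ℝ 1 h) {c : ℝ → ℝ × E3} {t₀ : ℝ} {c' : ℝ × E3}
    (hc : HasDerivAt c c' t₀) :
    HasDerivAt (fun t => ∫ ξ in (0:ℝ)..(c t).1, h (ξ, (c t).2))
      (c'.1 * h (c t₀) + ∫ ξ in (0:ℝ)..(c t₀).1, fderiv ℝ h (ξ, (c t₀).2) (0, c'.2)) t₀ := by
  set D := fderiv ℝ h with hDdef
  have hD : Continuous D := hh.continuous_fderiv one_ne_zero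
  have hdiff : Differentiable ℝ h := hh.differentiable one_ne_zero
  set x₀ := c t₀ with hx₀
  set FST : (ℝ × E3) →L[ℝ] ℝ := ContinuousLinearMap.fst ℝ ℝ E3 with hFST
  set SND : (ℝ × E3) →L[ℝ] E3 := ContinuousLinearMap.snd ℝ ℝ E3 with hSND
  set A : (ℝ × E3) →L[ℝ] (ℝ × E3) := (ContinuousLinearMap.inl ℝ ℝ E3).comp FST with hA
  set B : (ℝ × E3) →L[ℝ] (ℝ × E3) := (ContinuousLinearMap.inr ℝ ℝ E3).comp SND with hB
  set Φ : (ℝ × E3) → ℝ → ℝ := fun x u => x.1 * h (u * x.1, x.2) with hΦdef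
  set Φ' : (ℝ × E3) → ℝ → ((ℝ × E3) →L[ℝ] ℝ) := fun x u =>
    h (u * x.1, x.2) • FST + (x.1 * u) • ((D (u * x.1, x.2)).comp A)
      + x.1 • ((D (u * x.1, x.2)).comp B) with hΦ'def
  -- joint continuity of Φ'
  have hΦ'cont : Continuous fun p : (ℝ × E3) × ℝ => Φ' p.1 p.2 := by
    have h1 : Continuous fun p : (ℝ × E3) × ℝ => ((p.2 * p.1.1, p.1.2) : ℝ × E3) := by fun_prop
    refine Continuous.add (Continuous.add ?_ ?_) ?_
    · exact (hh.continuous.comp h1).smul continuous_const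
    · exact (by fun_prop : Continuous fun p : (ℝ × E3) × ℝ => p.1.1 * p.2).smul
        ((hD.comp h1).clm_comp continuous_const)
    · exact (by fun_prop : Continuous fun p : (ℝ × E3) × ℝ => p.1.1).smul
        ((hD.comp h1).clm_comp continuous_const)
  -- pointwise differentiability of Φ in x
  have hΦdiff : ∀ (u : ℝ) (x : ℝ × E3), HasFDerivAt (fun x => Φ x u) (Φ' x u) x := by
    intro u x
    have hMu : HasFDerivAt (fun x : ℝ × E3 => ((u * x.1, x.2) : ℝ × E3))
        ((u • FST).prod SND) x := ((u • FST).prod SND).hasFDerivAt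
    have hm : HasFDerivAt (fun x : ℝ × E3 => h (u * x.1, x.2))
        ((D (u * x.1, x.2)).comp ((u • FST).prod SND)) x :=
      (hdiff (u * x.1, x.2)).hasFDerivAt.comp x hMu
    have h1 : HasFDerivAt (fun x : ℝ × E3 => x.1) FST x := hasFDerivAt_fst
    have := h1.mul hm
    refine this.congr_fderiv ?_
    refine ContinuousLinearMap.ext fun w => ?_
    have e1 : D (u * x.1, x.2) (u * w.1, w.2)
        = (u * w.1) * D (u * x.1, x.2) (1, 0) + D (u * x.1, x.2) (0, w.2) :=
      clm_split _ _ _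
    have e2 : D (u * x.1, x.2) (w.1, (0:E3))
        = w.1 * D (u * x.1, x.2) (1, 0) + D (u * x.1, x.2) (0, (0:E3)) := clm_split _ _ _
    simp only [hΦ'def, ContinuousLinearMap.add_apply, ContinuousLinearMap.smul_apply,
      ContinuousLinearMap.coe_comp', Function.comp_apply, ContinuousLinearMap.coe_fst',
      ContinuousLinearMap.coe_snd', ContinuousLinearMap.prod_apply, smul_eq_mul,
      ContinuousLinearMap.inl_apply, ContinuousLinearMap.inr_apply, hA, hB, hFST, hSND]
    rw [e1, e2, Prod.mk_zero_zero, map_zero, add_zero]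
    ring
  -- bound
  obtain ⟨C, hC⟩ : ∃ C, ∀ p ∈ (closedBall x₀ 1) ×ˢ (Set.uIcc (0:ℝ) 1), ‖Φ' p.1 p.2‖ ≤ C :=
    ((isCompact_closedBall x₀ 1).prod isCompact_uIcc).exists_bound_of_continuousOn
      hΦ'cont.continuousOn
  have hFder : HasFDerivAt (fun x => ∫ u in (0:ℝ)..1, Φ x u) (∫ u in (0:ℝ)..1, Φ' x₀ u) x₀ := by
    apply intervalIntegral.hasFDerivAt_integral_of_dominated_of_fderiv_le
      (F' := Φ') (bound := fun _ => C) (s := ball x₀ 1) (ball_mem_nhds x₀ one_pos)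
    · filter_upwards with x
      exact ((by fun_prop : Continuous fun u : ℝ => Φ x u)).aestronglyMeasurable
    · exact ((by fun_prop : Continuous fun u : ℝ => Φ x₀ u)).intervalIntegrable 0 1
    · exact ((hΦ'cont.comp (continuous_const.prodMk continuous_id)) :
        Continuous fun u : ℝ => Φ' x₀ u).aestronglyMeasurable
    · filter_upwards with u hu x hx
      exact hC (x, u) ⟨ball_subset_closedBall hx, Set.uIoc_subset_uIcc hu⟩
    · exact intervalIntegrable_const
    · filter_upwards with u hu x hx
      exact hΦdiff u x
  -- rewrite the integrand function
  have hfun : (fun x : ℝ × E3 => ∫ u in (0:ℝ)..1, Φ x u)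
      = fun x : ℝ × E3 => ∫ ξ in (0:ℝ)..x.1, h (ξ, x.2) := by
    funext x
    have h0 : (fun u => Φ x u) = fun u => x.1 * h (x.1 * u, x.2) := by
      funext u; simp [hΦdef, mul_comm]
    rw [h0, intervalIntegral.integral_const_mul, ← smul_eq_mul,
      intervalIntegral.smul_integral_comp_mul_left (fun ξ => h (ξ, x.2)) x.1]
    norm_num
  rw [hfun] at hFder
  have hcomp := hFder.comp_hasDerivAt t₀ hc
  have hval : (∫ u in (0:ℝ)..1, Φ' x₀ u) c'
      = c'.1 * h x₀ + ∫ ξ in (0:ℝ)..x₀.1, D (ξ, x₀.2) (0, c'.2) := by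
    have hΦ'int : IntervalIntegrable (Φ' x₀) MeasureTheory.volume 0 1 :=
      ((hΦ'cont.comp (continuous_const.prodMk continuous_id)).intervalIntegrable 0 1)
    rw [ContinuousLinearMap.intervalIntegral_apply hΦ'int c']
    have happ : (fun u => Φ' x₀ u c')
        = fun u => (c'.1 * (h (u * x₀.1, x₀.2) + u * (x₀.1 * D (u * x₀.1, x₀.2) (1, 0))))
          + x₀.1 * D (u * x₀.1, x₀.2) (0, c'.2) := by
      funext u
      simp only [hΦ'def, ContinuousLinearMap.add_apply, ContinuousLinearMap.smul_apply,
        ContinuousLinearMap.coe_comp', Function.comp_apply, ContinuousLinearMap.coe_fst',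
        ContinuousLinearMap.coe_snd', ContinuousLinearMap.inl_apply,
        ContinuousLinearMap.inr_apply, smul_eq_mul, hA, hB, hFST, hSND]
      rw [clm_split (D (u * x₀.1, x₀.2)) c'.1 0, Prod.mk_zero_zero, map_zero, add_zero]
      ring
    rw [happ]
    have hDc : ∀ w : ℝ × E3, Continuous fun u : ℝ => D (u * x₀.1, x₀.2) w := fun w =>
      ((hD.comp (by fun_prop)).clm_apply continuous_const)
    have hcont1 : Continuous fun u : ℝ =>
        c'.1 * (h (u * x₀.1, x₀.2) + u * (x₀.1 * D (u * x₀.1, x₀.2) (1, 0))) := by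
      refine continuous_const.mul (Continuous.add (hh.continuous.comp (by fun_prop)) ?_)
      exact continuous_id.mul (continuous_const.mul (hDc (1, 0)))
    have hcont2 : Continuous fun u : ℝ => x₀.1 * D (u * x₀.1, x₀.2) (0, c'.2) :=
      continuous_const.mul (hDc (0, c'.2))
    rw [intervalIntegral.integral_add (hcont1.intervalIntegrable 0 1)
      (hcont2.intervalIntegrable 0 1), intervalIntegral.integral_const_mul]
    congr 1
    · -- FTC part
      have hψ : ∀ u : ℝ, HasDerivAt (fun u : ℝ => u * h (u * x₀.1, x₀.2))
          (h (u * x₀.1, x₀.2) + u * (x₀.1 * D (u * x₀.1, x₀.2) (1, 0))) u := by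
        intro u
        have hγ : HasDerivAt (fun u : ℝ => ((u * x₀.1, x₀.2) : ℝ × E3)) ((x₀.1, 0)) u := by
          simpa using ((hasDerivAt_id u).mul_const x₀.1).prodMk (hasDerivAt_const u x₀.2)
        have hh' : HasDerivAt (fun u : ℝ => h (u * x₀.1, x₀.2))
            (D (u * x₀.1, x₀.2) (x₀.1, 0)) u :=
          (hdiff _).hasFDerivAt.comp_hasDerivAt u hγ
        have hmul := (hasDerivAt_id u).mul hh'
        refine hmul.congr_deriv ?_
        rw [clm_split (D (u * x₀.1, x₀.2)) x₀.1 0, Prod.mk_zero_zero, map_zero, add_zero]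
        simp only [id_eq]
        ring
      have hcψ : Continuous fun u : ℝ =>
          h (u * x₀.1, x₀.2) + u * (x₀.1 * D (u * x₀.1, x₀.2) (1, 0)) := by
        refine Continuous.add (hh.continuous.comp ?_) ?_
        · exact (show Continuous fun u : ℝ => ((u * x₀.1, x₀.2) : ℝ × E3) by fun_prop)
        · exact continuous_id.mul (continuous_const.mul (hDc (1, 0)))
      have := intervalIntegral.integral_eq_sub_of_hasDerivAt
        (f := fun u : ℝ => u * h (u * x₀.1, x₀.2)) (a := 0) (b := 1)
        (fun u _ => hψ u) (hcψ.intervalIntegrable 0 1)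
      rw [this]
      norm_num
    · -- change of variables part
      have h1 : (fun u : ℝ => x₀.1 * D (u * x₀.1, x₀.2) (0, c'.2))
          = fun u : ℝ => x₀.1 * (fun ξ : ℝ => D (ξ, x₀.2) (0, c'.2)) (x₀.1 * u) := by
        funext u; rw [mul_comm u x₀.1]
      rw [h1, intervalIntegral.integral_const_mul, ← smul_eq_mul,
        intervalIntegral.smul_integral_comp_mul_left (fun ξ => D (ξ, x₀.2) (0, c'.2)) x₀.1]
      norm_num
  rw [← hval]
  exact hcomp

end Stmt17Aux

set_option maxHeartbeats 1000000 in
open Stmt17Aux in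
theorem stmt_17 (F₀ F₁ F₂ F₃ : ℝ → ℝ → ℝ → ℝ → ℝ) (y : ℝ → ℝ) (a b : ℝ)
    (hF₀ : ContDiff ℝ 1 (uncurry4 F₀)) (hF₁ : ContDiff ℝ 1 (uncurry4 F₁))
    (hF₂ : ContDiff ℝ 1 (uncurry4 F₂)) (hF₃ : ContDiff ℝ 1 (uncurry4 F₃))
    (h₁ : ∀ t y p q, pdQ F₀ t y p q = pdT F₃ t y p q)
    (h₂ : ∀ t y p q, pdQ F₁ t y p q = pdY F₃ t y p q)
    (h₃ : ∀ t y p q, pdQ F₂ t y p q = pdP F₃ t y p q)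
    (h₄ : ∀ t y p q, pdP F₀ t y p q = pdT F₂ t y p q)
    (h₅ : ∀ t y p q, pdP F₁ t y p q = pdY F₂ t y p q)
    (h₆ : ∀ t y p q, pdY F₀ t y p q = pdT F₁ t y p q)
    (hF₃ne : ∀ t y p q, F₃ t y p q ≠ 0)
    (hy : ∀ t ∈ Set.Ioo a b, DifferentiableAt ℝ y t)
    (hy' : ∀ t ∈ Set.Ioo a b, DifferentiableAt ℝ (deriv y) t)
    (hy'' : ∀ t ∈ Set.Ioo a b, DifferentiableAt ℝ (deriv (deriv y)) t)
    (hode : ∀ t ∈ Set.Ioo a b,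
      F₃ t (y t) (deriv y t) (deriv (deriv y) t) * deriv (deriv (deriv y)) t
        + F₂ t (y t) (deriv y t) (deriv (deriv y) t) * deriv (deriv y) t
        + F₁ t (y t) (deriv y t) (deriv (deriv y) t) * deriv y t
        + F₀ t (y t) (deriv y t) (deriv (deriv y) t) = 0)
    (Ψ : ℝ → ℝ → ℝ → ℝ → ℝ)
    (hΨ : ∀ t y p q, Ψ t y p q =
      (∫ ξ in (0:ℝ)..t, F₀ ξ y p q) + (∫ ξ in (0:ℝ)..y, F₁ 0 ξ p q)
        + (∫ ξ in (0:ℝ)..p, F₂ 0 0 ξ q) + (∫ ξ in (0:ℝ)..q, F₃ 0 0 0 ξ)) :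
    ∃ c : ℝ, ∀ t ∈ Set.Ioo a b,
      Ψ t (y t) (deriv y t) (deriv (deriv y) t) = c := by
  -- The composite function is differentiable with derivative 0 on the interval
  have hg : ∀ t₀ ∈ Set.Ioo a b,
      HasDerivAt (fun t => Ψ t (y t) (deriv y t) (deriv (deriv y) t)) 0 t₀ := by
    intro t₀ ht₀
    have hY : HasDerivAt y (deriv y t₀) t₀ := (hy t₀ ht₀).hasDerivAt
    have hP : HasDerivAt (deriv y) (deriv (deriv y) t₀) t₀ := (hy' t₀ ht₀).hasDerivAt
    have hQ : HasDerivAt (deriv (deriv y)) (deriv (deriv (deriv y)) t₀) t₀ :=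
      (hy'' t₀ ht₀).hasDerivAt
    set Y₀ := y t₀ with hY₀
    set P₀ := deriv y t₀ with hP₀
    set Q₀ := deriv (deriv y) t₀ with hQ₀
    set R₀ := deriv (deriv (deriv y)) t₀ with hR₀
    -- curves
    have hcA : HasDerivAt (fun t => ((t, y t, deriv y t, deriv (deriv y) t) : ℝ × E3))
        ((1, P₀, Q₀, R₀)) t₀ :=
      (hasDerivAt_id t₀).prodMk (hY.prodMk (hP.prodMk hQ))
    have hcB : HasDerivAt (fun t => ((y t, deriv y t, deriv (deriv y) t, 0) : ℝ × E3))
        ((P₀, Q₀, R₀, 0)) t₀ :=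
      hY.prodMk (hP.prodMk (hQ.prodMk (hasDerivAt_const t₀ 0)))
    have hcC : HasDerivAt (fun t => ((deriv y t, deriv (deriv y) t, 0, 0) : ℝ × E3))
        ((Q₀, R₀, 0, 0)) t₀ :=
      hP.prodMk (hQ.prodMk ((hasDerivAt_const t₀ 0).prodMk (hasDerivAt_const t₀ 0)))
    have hcD : HasDerivAt (fun t => ((deriv (deriv y) t, 0, 0, 0) : ℝ × E3))
        ((R₀, 0, 0, 0)) t₀ :=
      hQ.prodMk ((hasDerivAt_const t₀ 0).prodMk ((hasDerivAt_const t₀ 0).prodMk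
        (hasDerivAt_const t₀ 0)))
    -- contDiff of the partially-frozen integrands
    have hhB : ContDiff ℝ 1 (fun v : ℝ × E3 => uncurry4 F₁ (0, v.1, v.2.1, v.2.2.1)) :=
      hF₁.comp (by fun_prop)
    have hhC : ContDiff ℝ 1 (fun v : ℝ × E3 => uncurry4 F₂ (0, 0, v.1, v.2.1)) :=
      hF₂.comp (by fun_prop)
    have hhD : ContDiff ℝ 1 (fun v : ℝ × E3 => uncurry4 F₃ (0, 0, 0, v.1)) :=
      hF₃.comp (by fun_prop)
    -- the four HasDerivAt facts
    have hA : HasDerivAt (fun t => ∫ ξ in (0:ℝ)..t, F₀ ξ (y t) (deriv y t) (deriv (deriv y) t))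
        (1 * F₀ t₀ Y₀ P₀ Q₀
          + ∫ ξ in (0:ℝ)..t₀, fderiv ℝ (uncurry4 F₀) (ξ, Y₀, P₀, Q₀) (0, P₀, Q₀, R₀)) t₀ := by
      have H := key (uncurry4 F₀) hF₀ hcA
      exact H
    have hB : HasDerivAt (fun t => ∫ ξ in (0:ℝ)..(y t), F₁ 0 ξ (deriv y t) (deriv (deriv y) t))
        (P₀ * F₁ 0 Y₀ P₀ Q₀
          + ∫ ξ in (0:ℝ)..Y₀, fderiv ℝ (fun v : ℝ × E3 => uncurry4 F₁ (0, v.1, v.2.1, v.2.2.1))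
              (ξ, P₀, Q₀, 0) (0, Q₀, R₀, 0)) t₀ := by
      have H := key _ hhB hcB
      exact H
    have hC : HasDerivAt (fun t => ∫ ξ in (0:ℝ)..(deriv y t), F₂ 0 0 ξ (deriv (deriv y) t))
        (Q₀ * F₂ 0 0 P₀ Q₀
          + ∫ ξ in (0:ℝ)..P₀, fderiv ℝ (fun v : ℝ × E3 => uncurry4 F₂ (0, 0, v.1, v.2.1))
              (ξ, Q₀, 0, 0) (0, R₀, 0, 0)) t₀ := by
      have H := key _ hhC hcC
      exact H
    have hD : HasDerivAt (fun t => ∫ ξ in (0:ℝ)..(deriv (deriv y) t), F₃ 0 0 0 ξ)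
        (R₀ * F₃ 0 0 0 Q₀
          + ∫ ξ in (0:ℝ)..Q₀, fderiv ℝ (fun v : ℝ × E3 => uncurry4 F₃ (0, 0, 0, v.1))
              (ξ, 0, 0, 0) (0, 0, 0, 0)) t₀ := by
      have H := key _ hhD hcD
      exact H
    -- compute the integral terms
    have eA : (∫ ξ in (0:ℝ)..t₀, fderiv ℝ (uncurry4 F₀) (ξ, Y₀, P₀, Q₀) (0, P₀, Q₀, R₀))
        = P₀ * (F₁ t₀ Y₀ P₀ Q₀ - F₁ 0 Y₀ P₀ Q₀) + Q₀ * (F₂ t₀ Y₀ P₀ Q₀ - F₂ 0 Y₀ P₀ Q₀)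
          + R₀ * (F₃ t₀ Y₀ P₀ Q₀ - F₃ 0 Y₀ P₀ Q₀) := by
      have h1 : (fun ξ => fderiv ℝ (uncurry4 F₀) (ξ, Y₀, P₀, Q₀) (0, P₀, Q₀, R₀))
          = fun ξ => P₀ * pdT F₁ ξ Y₀ P₀ Q₀ + Q₀ * pdT F₂ ξ Y₀ P₀ Q₀
              + R₀ * pdT F₃ ξ Y₀ P₀ Q₀ := by
        funext ξ
        rw [fderiv_apply4 hF₀, h₆, h₄, h₁]; ring
      have i1 : IntervalIntegrable (fun ξ => P₀ * pdT F₁ ξ Y₀ P₀ Q₀) MeasureTheory.volume 0 t₀ :=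
        (continuous_const.mul (contPdT hF₁ Y₀ P₀ Q₀)).intervalIntegrable 0 t₀
      have i2 : IntervalIntegrable (fun ξ => Q₀ * pdT F₂ ξ Y₀ P₀ Q₀) MeasureTheory.volume 0 t₀ :=
        (continuous_const.mul (contPdT hF₂ Y₀ P₀ Q₀)).intervalIntegrable 0 t₀
      have i3 : IntervalIntegrable (fun ξ => R₀ * pdT F₃ ξ Y₀ P₀ Q₀) MeasureTheory.volume 0 t₀ :=
        (continuous_const.mul (contPdT hF₃ Y₀ P₀ Q₀)).intervalIntegrable 0 t₀
      rw [h1, intervalIntegral.integral_add (i1.add i2) i3, intervalIntegral.integral_add i1 i2,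
        intervalIntegral.integral_const_mul, intervalIntegral.integral_const_mul,
        intervalIntegral.integral_const_mul, ftcT hF₁, ftcT hF₂, ftcT hF₃]
    have eB : (∫ ξ in (0:ℝ)..Y₀, fderiv ℝ (fun v : ℝ × E3 => uncurry4 F₁ (0, v.1, v.2.1, v.2.2.1))
            (ξ, P₀, Q₀, 0) (0, Q₀, R₀, 0))
        = Q₀ * (F₂ 0 Y₀ P₀ Q₀ - F₂ 0 0 P₀ Q₀) + R₀ * (F₃ 0 Y₀ P₀ Q₀ - F₃ 0 0 P₀ Q₀) := by
      have h1 : (fun ξ => fderiv ℝ (fun v : ℝ × E3 => uncurry4 F₁ (0, v.1, v.2.1, v.2.2.1))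
              (ξ, P₀, Q₀, 0) (0, Q₀, R₀, 0))
          = fun ξ => Q₀ * pdY F₂ 0 ξ P₀ Q₀ + R₀ * pdY F₃ 0 ξ P₀ Q₀ := by
        funext ξ
        rw [fderiv_inner2 hF₁, fderiv_apply4 hF₁, h₅, h₂]; ring
      have i1 : IntervalIntegrable (fun ξ => Q₀ * pdY F₂ 0 ξ P₀ Q₀) MeasureTheory.volume 0 Y₀ :=
        (continuous_const.mul (contPdY hF₂ 0 P₀ Q₀)).intervalIntegrable 0 Y₀
      have i2 : IntervalIntegrable (fun ξ => R₀ * pdY F₃ 0 ξ P₀ Q₀) MeasureTheory.volume 0 Y₀ :=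
        (continuous_const.mul (contPdY hF₃ 0 P₀ Q₀)).intervalIntegrable 0 Y₀
      rw [h1, intervalIntegral.integral_add i1 i2, intervalIntegral.integral_const_mul,
        intervalIntegral.integral_const_mul, ftcY hF₂, ftcY hF₃]
    have eC : (∫ ξ in (0:ℝ)..P₀, fderiv ℝ (fun v : ℝ × E3 => uncurry4 F₂ (0, 0, v.1, v.2.1))
            (ξ, Q₀, 0, 0) (0, R₀, 0, 0))
        = R₀ * (F₃ 0 0 P₀ Q₀ - F₃ 0 0 0 Q₀) := by
      have h1 : (fun ξ => fderiv ℝ (fun v : ℝ × E3 => uncurry4 F₂ (0, 0, v.1, v.2.1))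
              (ξ, Q₀, 0, 0) (0, R₀, 0, 0))
          = fun ξ => R₀ * pdP F₃ 0 0 ξ Q₀ := by
        funext ξ
        rw [fderiv_inner3 hF₂, fderiv_apply4 hF₂, h₃]; ring
      rw [h1, intervalIntegral.integral_const_mul, ftcP hF₃]
    have eD : (∫ ξ in (0:ℝ)..Q₀, fderiv ℝ (fun v : ℝ × E3 => uncurry4 F₃ (0, 0, 0, v.1))
            (ξ, 0, 0, 0) (0, 0, 0, 0)) = 0 := by
      have h1 : (fun ξ : ℝ => fderiv ℝ (fun v : ℝ × E3 => uncurry4 F₃ (0, 0, 0, v.1))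
              (ξ, 0, 0, 0) ((0 : ℝ), (0 : ℝ), (0 : ℝ), (0 : ℝ))) = fun _ => (0:ℝ) := by
        funext ξ
        rw [fderiv_inner4 hF₃]
        simp [Prod.mk_zero_zero]
      rw [h1, intervalIntegral.integral_zero]
    -- combine
    have hsum := ((hA.add hB).add hC).add hD
    have hfun : (fun t => Ψ t (y t) (deriv y t) (deriv (deriv y) t))
        = (fun t => (∫ ξ in (0:ℝ)..t, F₀ ξ (y t) (deriv y t) (deriv (deriv y) t))
            + (∫ ξ in (0:ℝ)..(y t), F₁ 0 ξ (deriv y t) (deriv (deriv y) t))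
            + (∫ ξ in (0:ℝ)..(deriv y t), F₂ 0 0 ξ (deriv (deriv y) t))
            + (∫ ξ in (0:ℝ)..(deriv (deriv y) t), F₃ 0 0 0 ξ)) :=
      funext fun t => hΨ t (y t) (deriv y t) (deriv (deriv y) t)
    rw [hfun]
    refine hsum.congr_deriv ?_
    rw [eA, eB, eC, eD]
    linear_combination (hode t₀ ht₀)
  -- conclude constancy via the mean value inequality
  refine ⟨Ψ ((a+b)/2) (y ((a+b)/2)) (deriv y ((a+b)/2)) (deriv (deriv y) ((a+b)/2)),
    fun t ht => ?_⟩
  have hab : a < b := ht.1.trans ht.2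
  have hm : (a+b)/2 ∈ Set.Ioo a b := by constructor <;> (simp only [Set.mem_Ioo] at ht ⊢; linarith)
  set g := fun t => Ψ t (y t) (deriv y t) (deriv (deriv y) t) with hgdef
  have hmvt := (convex_Ioo a b).norm_image_sub_le_of_norm_hasFDerivWithin_le
    (f := g) (f' := fun _ => (0 : ℝ →L[ℝ] ℝ)) (C := 0)
    (fun x hx => by
      have h0 : ContinuousLinearMap.toSpanSingleton ℝ (0:ℝ) = 0 := by
        ext1
        simp
      exact (h0 ▸ (hg x hx).hasFDerivAt).hasFDerivWithinAt)
    (fun x _ => by simp) hm ht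
  have : ‖g t - g ((a+b)/2)‖ ≤ 0 := by simpa using hmvt
  have h0 : g t - g ((a+b)/2) = 0 := by
    have := norm_le_zero_iff.mp this
    exact this
  exact sub_eq_zero.mp h0
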